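/- Let M be a maximal matching and M* a maximum matching of a graph G, and for i ≥ 1 let k_{2i+1} be the number of connected components of M ⊕ M* that are paths with 2i+1 edges. Then |M*| − |M| ≤ (1/2)·k₃ + (1/2)|M|, where k₃ is the number of length-3 paths. -/

import Mathlib

/-- A matching of `G` given as a finite set of edges. -/
def IsMatching {V : Type*} (G : SimpleGraph V) (M : Finset (Sym2 V)) : Prop :=
  (M : Set (Sym2 V)) ⊆ G.edgeSet ∧
    ∀ e ∈ M, ∀ f ∈ M, e ≠ f → ∀ v : V, v ∈ e → v ∉ f

def IsMaximalMatching {V : Type*} [DecidableEq V] (G : SimpleGraph V)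
    (M : Finset (Sym2 V)) : Prop :=
  IsMatching G M ∧ ∀ e ∈ G.edgeSet, e ∉ M → ¬ IsMatching G (insert e M)

def IsMaximumMatching {V : Type*} (G : SimpleGraph V) (M : Finset (Sym2 V)) : Prop :=
  IsMatching G M ∧ ∀ N : Finset (Sym2 V), IsMatching G N → N.card ≤ M.card

/-- The connected component `c` of `H` is a path with `n` edges: its vertex set is the
support of a path of length `n` in `H`, and every edge of `H` inside that support is an
edge of the path. -/
def IsPathComponent {V : Type*} (H : SimpleGraph V) (c : H.ConnectedComponent)
    (n : ℕ) : Prop :=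
  ∃ (u v : V) (w : H.Walk u v), w.IsPath ∧ w.length = n ∧
    (∀ x : V, H.connectedComponentMk x = c ↔ x ∈ w.support) ∧
    (∀ e ∈ H.edgeSet, (∀ x : V, x ∈ e → x ∈ w.support) → e ∈ w.edges)

set_option linter.unusedSectionVars false
set_option maxHeartbeats 1000000

open SimpleGraph Finset

namespace SDAux

variable {V : Type*} [Fintype V] [DecidableEq V]

lemma eqOf {G : SimpleGraph V} {M : Finset (Sym2 V)} (h : IsMatching G M) :
    ∀ e ∈ M, ∀ f ∈ M, ∀ v : V, v ∈ e → v ∈ f → e = f := by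
  intro e he f hf v hv hv'
  by_contra hne
  exact h.2 e he f hf hne v hv hv'

open scoped Classical in
noncomputable def ends (e : Sym2 V) : Finset V :=
  Finset.univ.filter (fun v => v ∈ e)

@[simp] lemma mem_ends {e : Sym2 V} {v : V} : v ∈ ends e ↔ v ∈ e := by
  classical
  simp [ends]

lemma card_ends {e : Sym2 V} (h : ¬ e.IsDiag) : (ends e).card = 2 := by
  obtain ⟨⟨a, b⟩, rfl⟩ : ∃ pq : V × V, Sym2.mk pq.1 pq.2 = e := ⟨Quot.out e, Quot.out_eq e⟩
  have hab : a ≠ b := by simpa using h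
  have : ends (s(a,b)) = {a, b} := by
    ext v; simp [Sym2.mem_iff]
  rw [this, Finset.card_insert_of_notMem (by simpa using hab), Finset.card_singleton]

noncomputable def edgeComp (H : SimpleGraph V) (e : Sym2 V) : H.ConnectedComponent :=
  H.connectedComponentMk (Quot.out e).1

lemma edgeComp_eq {H : SimpleGraph V} {e : Sym2 V} (he : e ∈ H.edgeSet) {v : V}
    (hv : v ∈ e) : H.connectedComponentMk v = edgeComp H e := by
  set p := Quot.out e with hp
  have h1 : Sym2.mk p.1 p.2 = e := Quot.out_eq e
  have h2 : Sym2.mk p.1 p.2 = s(p.1, p.2) := rfl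
  have hadj : H.Adj p.1 p.2 := by
    rw [← SimpleGraph.mem_edgeSet, ← h2, h1]; exact he
  rw [← h1, h2, Sym2.mem_iff] at hv
  rcases hv with rfl | rfl
  · rfl
  · exact (SimpleGraph.ConnectedComponent.connectedComponentMk_eq_of_adj hadj).symm

section Core

variable {H : SimpleGraph V} {M Mstar : Finset (Sym2 V)}

lemma exists_first_edge {x y : V} (P : H.Walk x y) (hxy : x ≠ y) :
    ∃ x2, x2 ∈ P.support ∧ s(x, x2) ∈ P.edges := by
  cases P with
  | nil => exact absurd rfl hxy
  | @cons _ v _ h p => exact ⟨v, by simp [p.start_mem_support], by simp⟩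

lemma internal_two_edges {x y w : V} (P : H.Walk x y) (hP : P.IsPath)
    (hw : w ∈ P.support) (hwx : w ≠ x) (hwy : w ≠ y) :
    ∃ d1 d2, d1 ∈ P.edges ∧ d2 ∈ P.edges ∧ d1 ≠ d2 ∧ w ∈ d1 ∧ w ∈ d2 := by
  induction P with
  | nil =>
    simp only [SimpleGraph.Walk.support_nil, List.mem_singleton] at hw
    exact absurd hw hwx
  | @cons x v y h p ih =>
    rw [SimpleGraph.Walk.support_cons, List.mem_cons] at hw
    rcases hw with rfl | hw
    · exact absurd rfl hwx
    by_cases hwv : w = v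
    · subst hwv
      obtain ⟨v2, hv2s, hv2e⟩ := exists_first_edge p hwy
      refine ⟨s(x, w), s(w, v2), by simp, by simp [hv2e], ?_, by simp, by simp⟩
      intro hcon
      have hxw : x ≠ w := h.ne
      have hxp : x ∉ p.support := ((SimpleGraph.Walk.cons_isPath_iff h p).mp hP).2
      rw [Sym2.eq_iff] at hcon
      rcases hcon with ⟨rfl, _⟩ | ⟨rfl, _⟩
      · exact hxw rfl
      · exact hxp hv2s
    · obtain ⟨d1, d2, h1, h2, h3, h4, h5⟩ :=
        ih ((SimpleGraph.Walk.cons_isPath_iff h p).mp hP).1 hw hwv hwy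
      exact ⟨d1, d2, by simp [h1], by simp [h2], h3, h4, h5⟩

variable (hM : ∀ e ∈ M, ∀ f ∈ M, ∀ v : V, v ∈ e → v ∈ f → e = f)
  (hMs : ∀ e ∈ Mstar, ∀ f ∈ Mstar, ∀ v : V, v ∈ e → v ∈ f → e = f)
  (hHE : ∀ e, e ∈ H.edgeSet ↔ (e ∈ M ∧ e ∉ Mstar) ∨ (e ∈ Mstar ∧ e ∉ M))

include hM hMs hHE

lemma key {x y w : V} (P : H.Walk x y) (hP : P.IsPath) (hxy : x ≠ y)
    (hx : ∀ g ∈ M, x ∉ g) (hy : ∀ g ∈ M, y ∉ g)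
    {g : Sym2 V} (hg : g ∈ H.edgeSet) (hw : w ∈ P.support) (hwg : w ∈ g) :
    g ∈ P.edges := by
  have hgMS : (g ∈ M ∧ g ∉ Mstar) ∨ (g ∈ Mstar ∧ g ∉ M) := (hHE g).mp hg
  by_cases hwx : w = x
  · subst hwx
    obtain ⟨x2, hx2s, hx2e⟩ := exists_first_edge P hxy
    have he1 : s(w, x2) ∈ H.edgeSet := P.edges_subset_edgeSet hx2e
    have he1s : s(w, x2) ∈ Mstar := by
      rcases (hHE _).mp he1 with ⟨h1, _⟩ | ⟨h1, _⟩
      · exact absurd (Sym2.mem_mk_left w x2) (hx _ h1)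
      · exact h1
    rcases hgMS with ⟨h1, _⟩ | ⟨h1, _⟩
    · exact absurd hwg (hx _ h1)
    · have := hMs g h1 _ he1s w hwg (Sym2.mem_mk_left w x2)
      rw [this]; exact hx2e
  by_cases hwy : w = y
  · subst hwy
    obtain ⟨y2, hy2s, hy2e⟩ := exists_first_edge P.reverse (Ne.symm hxy)
    rw [SimpleGraph.Walk.edges_reverse, List.mem_reverse] at hy2e
    have he1 : s(w, y2) ∈ H.edgeSet := P.edges_subset_edgeSet hy2e
    have he1s : s(w, y2) ∈ Mstar := by
      rcases (hHE _).mp he1 with ⟨h1, _⟩ | ⟨h1, _⟩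
      · exact absurd (Sym2.mem_mk_left w y2) (hy _ h1)
      · exact h1
    rcases hgMS with ⟨h1, _⟩ | ⟨h1, _⟩
    · exact absurd hwg (hy _ h1)
    · have := hMs g h1 _ he1s w hwg (Sym2.mem_mk_left w y2)
      rw [this]; exact hy2e
  · obtain ⟨d1, d2, h1, h2, h3, h4, h5⟩ := internal_two_edges P hP hw hwx hwy
    have hd1 := (hHE d1).mp (P.edges_subset_edgeSet h1)
    have hd2 := (hHE d2).mp (P.edges_subset_edgeSet h2)
    -- one of d1, d2 is in M and the other in Mstar
    have hsplit : (d1 ∈ M ∧ d2 ∈ Mstar) ∨ (d1 ∈ Mstar ∧ d2 ∈ M) := by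
      rcases hd1 with ⟨hm1, hs1⟩ | ⟨hs1, hm1⟩ <;> rcases hd2 with ⟨hm2, hs2⟩ | ⟨hs2, hm2⟩
      · exact absurd (hM d1 hm1 d2 hm2 w h4 h5) h3
      · exact Or.inl ⟨hm1, hs2⟩
      · exact Or.inr ⟨hs1, hm2⟩
      · exact absurd (hMs d1 hs1 d2 hs2 w h4 h5) h3
    rcases hgMS with ⟨h1g, _⟩ | ⟨h1g, _⟩
    · rcases hsplit with ⟨hm, _⟩ | ⟨_, hm⟩
      · rw [hM g h1g d1 hm w hwg h4]; exact h1
      · rw [hM g h1g d2 hm w hwg h5]; exact h2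
    · rcases hsplit with ⟨_, hs⟩ | ⟨hs, _⟩
      · rw [hMs g h1g d2 hs w hwg h5]; exact h2
      · rw [hMs g h1g d1 hs w hwg h4]; exact h1

omit hM hMs hHE in
lemma boundary {z t : V} (Q : H.Walk z t) (S : Set V) (hz : z ∉ S) (ht : t ∈ S) :
    ∃ u w, H.Adj u w ∧ u ∉ S ∧ w ∈ S := by
  obtain ⟨d, _, h1, h2⟩ := Q.exists_boundary_dart Sᶜ hz (by simp [ht])
  exact ⟨d.fst, d.snd, d.adj, h1, by simpa using h2⟩

lemma three_unmatched {x y z : V}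
    (hxU : ∀ g ∈ M, x ∉ g) (hyU : ∀ g ∈ M, y ∉ g) (hzU : ∀ g ∈ M, z ∉ g)
    (hxy : x ≠ y) (hxz : x ≠ z) (hyz : y ≠ z)
    (hr1 : H.Reachable x y) (hr2 : H.Reachable z y) : False := by
  obtain ⟨w0⟩ := hr1
  set P : H.Path x y := w0.toPath with hPdef
  have hzP : z ∉ (P : H.Walk x y).support := by
    intro hzs
    obtain ⟨d1, d2, h1, h2, h3, h4, h5⟩ :=
      internal_two_edges (P : H.Walk x y) P.2 hzs (Ne.symm hxz) (Ne.symm hyz)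
    have hd1 := (hHE d1).mp ((P : H.Walk x y).edges_subset_edgeSet h1)
    have hd2 := (hHE d2).mp ((P : H.Walk x y).edges_subset_edgeSet h2)
    rcases hd1 with ⟨hm1, hs1⟩ | ⟨hs1, hm1⟩
    · exact hzU d1 hm1 h4
    rcases hd2 with ⟨hm2, hs2⟩ | ⟨hs2, hm2⟩
    · exact hzU d2 hm2 h5
    · exact h3 (hMs d1 hs1 d2 hs2 z h4 h5)
  obtain ⟨Q⟩ := hr2
  obtain ⟨u, w, hadj, huS, hwS⟩ :=
    boundary Q {v | v ∈ (P : H.Walk x y).support} hzP ((P : H.Walk x y).end_mem_support)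
  have hg : s(u, w) ∈ H.edgeSet := hadj
  have := key hM hMs hHE (P : H.Walk x y) P.2 hxy hxU hyU hg hwS
    (Sym2.mem_mk_right u w)
  exact huS ((P : H.Walk x y).fst_mem_support_of_mem_edges this)

end Core

section Counting

variable (H : SimpleGraph V) (M Mstar : Finset (Sym2 V))

open scoped Classical in
noncomputable def Ae (c : H.ConnectedComponent) : Finset (Sym2 V) :=
  (Mstar \ M).filter (fun e => edgeComp H e = c)

open scoped Classical in
noncomputable def Be (c : H.ConnectedComponent) : Finset (Sym2 V) :=
  (M \ Mstar).filter (fun e => edgeComp H e = c)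

noncomputable def Vs (c : H.ConnectedComponent) : Finset V :=
  (Ae H M Mstar c).biUnion ends

noncomputable def Vm (c : H.ConnectedComponent) : Finset V :=
  (Be H M Mstar c).biUnion ends

open scoped Classical in
noncomputable def UM (c : H.ConnectedComponent) : Finset V :=
  Finset.univ.filter (fun v => H.connectedComponentMk v = c ∧ ∀ g ∈ M, v ∉ g)

variable {H M Mstar}
variable {G : SimpleGraph V}
  (hGM : IsMatching G M) (hGMs : IsMatching G Mstar)
  (hHE : ∀ e, e ∈ H.edgeSet ↔ (e ∈ M ∧ e ∉ Mstar) ∨ (e ∈ Mstar ∧ e ∉ M))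

include hGM hGMs hHE

lemma Ae_subset {c : H.ConnectedComponent} {e : Sym2 V} (he : e ∈ Ae H M Mstar c) :
    e ∈ H.edgeSet ∧ e ∈ Mstar ∧ e ∉ M ∧ edgeComp H e = c ∧ ¬ e.IsDiag := by
  classical
  rw [Ae, Finset.mem_filter, Finset.mem_sdiff] at he
  refine ⟨(hHE e).mpr (Or.inr ⟨he.1.1, he.1.2⟩), he.1.1, he.1.2, he.2, ?_⟩
  exact SimpleGraph.not_isDiag_of_mem_edgeSet G (hGMs.1 he.1.1)

lemma Be_subset {c : H.ConnectedComponent} {e : Sym2 V} (he : e ∈ Be H M Mstar c) :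
    e ∈ H.edgeSet ∧ e ∈ M ∧ e ∉ Mstar ∧ edgeComp H e = c ∧ ¬ e.IsDiag := by
  classical
  rw [Be, Finset.mem_filter, Finset.mem_sdiff] at he
  refine ⟨(hHE e).mpr (Or.inl ⟨he.1.1, he.1.2⟩), he.1.1, he.1.2, he.2, ?_⟩
  exact SimpleGraph.not_isDiag_of_mem_edgeSet G (hGM.1 he.1.1)

lemma card_Vs (c : H.ConnectedComponent) :
    (Vs H M Mstar c).card = 2 * (Ae H M Mstar c).card := by
  classical
  rw [Vs, Finset.card_biUnion]
  · rw [Finset.sum_congr rfl (fun e he => card_ends (Ae_subset hGM hGMs hHE he).2.2.2.2)]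
    simp [mul_comm]
  · intro e he f hf hef
    rw [Function.onFun, Finset.disjoint_left]
    intro v hv hv'
    rw [mem_ends] at hv hv'
    exact hef (eqOf hGMs e (Ae_subset hGM hGMs hHE he).2.1 f
      (Ae_subset hGM hGMs hHE hf).2.1 v hv hv')

lemma card_Vm (c : H.ConnectedComponent) :
    (Vm H M Mstar c).card = 2 * (Be H M Mstar c).card := by
  classical
  rw [Vm, Finset.card_biUnion]
  · rw [Finset.sum_congr rfl (fun e he => card_ends (Be_subset hGM hGMs hHE he).2.2.2.2)]
    simp [mul_comm]
  · intro e he f hf hef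
    rw [Function.onFun, Finset.disjoint_left]
    intro v hv hv'
    rw [mem_ends] at hv hv'
    exact hef (eqOf hGM e (Be_subset hGM hGMs hHE he).2.1 f
      (Be_subset hGM hGMs hHE hf).2.1 v hv hv')

lemma sdiff_subset_UM (c : H.ConnectedComponent) :
    Vs H M Mstar c \ Vm H M Mstar c ⊆ UM H M c := by
  classical
  intro v hv
  rw [Finset.mem_sdiff, Vs, Finset.mem_biUnion] at hv
  obtain ⟨⟨e, he, hve⟩, hnot⟩ := hv
  rw [mem_ends] at hve
  obtain ⟨heH, heMs, heM, hec, _⟩ := Ae_subset hGM hGMs hHE he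
  rw [UM, Finset.mem_filter]
  refine ⟨Finset.mem_univ v, by rw [edgeComp_eq heH hve, hec], ?_⟩
  intro g hg hvg
  by_cases hgs : g ∈ Mstar
  · exact heM (eqOf hGMs g hgs e heMs v hvg hve ▸ hg)
  · have hgH : g ∈ H.edgeSet := (hHE g).mpr (Or.inl ⟨hg, hgs⟩)
    have : g ∈ Be H M Mstar c := by
      rw [Be, Finset.mem_filter, Finset.mem_sdiff]
      refine ⟨⟨hg, hgs⟩, ?_⟩
      rw [← edgeComp_eq hgH hvg, edgeComp_eq heH hve, hec]
    exact hnot (by rw [Vm, Finset.mem_biUnion]; exact ⟨g, this, mem_ends.mpr hvg⟩)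

lemma card_UM_le (c : H.ConnectedComponent) : (UM H M c).card ≤ 2 := by
  classical
  by_contra hcon
  push_neg at hcon
  rw [Finset.two_lt_card] at hcon
  obtain ⟨x, hx, y, hy, z, hz, hxy, hxz, hyz⟩ := hcon
  rw [UM, Finset.mem_filter] at hx hy hz
  exact three_unmatched (eqOf hGM) (eqOf hGMs) hHE hx.2.2 hy.2.2 hz.2.2 hxy hxz hyz
    (SimpleGraph.ConnectedComponent.eq.mp (hx.2.1.trans hy.2.1.symm))
    (SimpleGraph.ConnectedComponent.eq.mp (hz.2.1.trans hy.2.1.symm))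

end Counting

section P3

variable {H : SimpleGraph V} {M Mstar : Finset (Sym2 V)} {G : SimpleGraph V}

lemma isPathComponent3
    (hGM : IsMatching G M) (hGMs : IsMatching G Mstar)
    (hHE : ∀ e, e ∈ H.edgeSet ↔ (e ∈ M ∧ e ∉ Mstar) ∨ (e ∈ Mstar ∧ e ∉ M))
    (c : H.ConnectedComponent)
    (ha : (Ae H M Mstar c).card = 2) (hb : (Be H M Mstar c).card = 1) :
    IsPathComponent H c 3 := by
  classical
  obtain ⟨e, hbe⟩ := Finset.card_eq_one.mp hb
  have heB : e ∈ Be H M Mstar c := hbe ▸ Finset.mem_singleton_self e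
  obtain ⟨heH, heM, heMs, hec, hed⟩ := Be_subset hGM hGMs hHE heB
  obtain ⟨⟨p, q⟩, rfl⟩ : ∃ pq : V × V, Sym2.mk pq.1 pq.2 = e := ⟨Quot.out e, Quot.out_eq e⟩
  have hpq : p ≠ q := by simpa using hed
  have hVm : Vm H M Mstar c = {p, q} := by
    rw [Vm, hbe, Finset.singleton_biUnion]
    ext v; simp [Sym2.mem_iff]
  have hVs4 : (Vs H M Mstar c).card = 4 := by
    rw [card_Vs hGM hGMs hHE, ha]
  have hsub := sdiff_subset_UM hGM hGMs hHE c
  have hUM2 := card_UM_le hGM hGMs hHE c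
  have hdiffle : (Vs H M Mstar c \ Vm H M Mstar c).card ≤ 2 :=
    le_trans (Finset.card_le_card hsub) hUM2
  have hVmcard : (Vm H M Mstar c).card = 2 := by
    rw [card_Vm hGM hGMs hHE, hb]
  have hVmVs : Vm H M Mstar c ⊆ Vs H M Mstar c := by
    have hsplit := Finset.card_sdiff_add_card_inter (Vs H M Mstar c) (Vm H M Mstar c)
    have hint : (Vm H M Mstar c).card ≤ (Vs H M Mstar c ∩ Vm H M Mstar c).card := by omega
    have := Finset.eq_of_subset_of_card_le Finset.inter_subset_right hint
    intro v hv
    rw [← this] at hv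
    exact Finset.mem_of_mem_inter_left hv
  have hpVs : p ∈ Vs H M Mstar c := hVmVs (by rw [hVm]; simp)
  have hqVs : q ∈ Vs H M Mstar c := hVmVs (by rw [hVm]; simp)
  rw [Vs, Finset.mem_biUnion] at hpVs hqVs
  obtain ⟨e1, he1A, hpe1⟩ := hpVs
  obtain ⟨e2, he2A, hqe2⟩ := hqVs
  rw [mem_ends] at hpe1 hqe2
  obtain ⟨he1H, he1Ms, he1M, he1c, he1d⟩ := Ae_subset hGM hGMs hHE he1A
  obtain ⟨he2H, he2Ms, he2M, he2c, he2d⟩ := Ae_subset hGM hGMs hHE he2A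
  have hne12 : e1 ≠ e2 := by
    rintro rfl
    have : e1 = s(p, q) :=
      Sym2.eq_of_ne_mem hpq hpe1 hqe2 (Sym2.mem_mk_left p q) (Sym2.mem_mk_right p q)
    exact he1M (this ▸ heM)
  obtain ⟨x, he1x⟩ := Sym2.mem_iff_exists.mp hpe1
  obtain ⟨y, he2y⟩ := Sym2.mem_iff_exists.mp hqe2
  have hxe1 : x ∈ e1 := he1x ▸ Sym2.mem_mk_right p x
  have hye2 : y ∈ e2 := he2y ▸ Sym2.mem_mk_right q y
  have hxp : x ≠ p := by
    intro h; rw [he1x, h] at he1d; exact he1d (by simp)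
  have hyq : y ≠ q := by
    intro h; rw [he2y, h] at he2d; exact he2d (by simp)
  have hxq : x ≠ q := by
    rintro rfl
    exact hne12 (eqOf hGMs e1 he1Ms e2 he2Ms x hxe1 hqe2)
  have hyp : y ≠ p := by
    rintro rfl
    exact hne12 (eqOf hGMs e1 he1Ms e2 he2Ms y hpe1 hye2)
  have hxy : x ≠ y := by
    rintro rfl
    exact hne12 (eqOf hGMs e1 he1Ms e2 he2Ms x hxe1 hye2)
  have hxUM : x ∈ UM H M c := by
    apply hsub
    rw [Finset.mem_sdiff]
    constructor
    · rw [Vs, Finset.mem_biUnion]; exact ⟨e1, he1A, mem_ends.mpr hxe1⟩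
    · rw [hVm]; simp [hxp, hxq]
  have hyUM : y ∈ UM H M c := by
    apply hsub
    rw [Finset.mem_sdiff]
    constructor
    · rw [Vs, Finset.mem_biUnion]; exact ⟨e2, he2A, mem_ends.mpr hye2⟩
    · rw [hVm]; simp [hyp, hyq]
  rw [UM, Finset.mem_filter] at hxUM hyUM
  have hxunm : ∀ g ∈ M, x ∉ g := hxUM.2.2
  have hyunm : ∀ g ∈ M, y ∉ g := hyUM.2.2
  have ha1 : H.Adj x p := by
    rw [← SimpleGraph.mem_edgeSet]
    have : s(x, p) = e1 := by rw [he1x, Sym2.eq_swap]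
    rw [this]; exact he1H
  have ha2 : H.Adj p q := heH
  have ha3 : H.Adj q y := by
    rw [← SimpleGraph.mem_edgeSet]
    have : s(q, y) = e2 := he2y.symm
    rw [this]; exact he2H
  let W : H.Walk x y := .cons ha1 (.cons ha2 (.cons ha3 .nil))
  have hsupp : W.support = [x, p, q, y] := rfl
  have hWpath : W.IsPath := by
    rw [SimpleGraph.Walk.isPath_def, hsupp]
    simp [hxp, hxq, hxy, hpq, hyp.symm, hyq.symm]
  have hcomp : ∀ v ∈ W.support, H.connectedComponentMk v = c := by
    intro v hv
    rw [hsupp] at hv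
    simp only [List.mem_cons, List.not_mem_nil, or_false] at hv
    rcases hv with rfl | rfl | rfl | rfl
    · rw [edgeComp_eq he1H hxe1, he1c]
    · rw [edgeComp_eq heH (Sym2.mem_mk_left _ _), hec]
    · rw [edgeComp_eq heH (Sym2.mem_mk_right _ _), hec]
    · rw [edgeComp_eq he2H hye2, he2c]
  refine ⟨x, y, W, hWpath, rfl, ?_, ?_⟩
  · intro v
    constructor
    · intro hv
      by_contra hvs
      have hreach : H.Reachable v p := by
        apply SimpleGraph.ConnectedComponent.eq.mp
        rw [hv, hcomp p (by rw [hsupp]; simp)]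
      obtain ⟨Q⟩ := hreach
      obtain ⟨u, t, hadj, huS, htS⟩ := boundary Q {a | a ∈ W.support}
        (by simpa using hvs) (by rw [Set.mem_setOf_eq, hsupp]; simp)
      have hkey := key (eqOf hGM) (eqOf hGMs) hHE W hWpath hxy hxunm hyunm
        (hadj : s(u, t) ∈ H.edgeSet) htS (Sym2.mem_mk_right u t)
      exact huS (W.fst_mem_support_of_mem_edges hkey)
    · intro hv
      exact hcomp v hv
  · intro g hg hgsupp
    obtain ⟨⟨g1, g2⟩, rfl⟩ : ∃ pq : V × V, Sym2.mk pq.1 pq.2 = g := ⟨Quot.out g, Quot.out_eq g⟩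
    exact key (eqOf hGM) (eqOf hGMs) hHE W hWpath hxy hxunm hyunm hg
      (hgsupp g1 (Sym2.mem_mk_left g1 g2)) (Sym2.mem_mk_left g1 g2)

end P3

section Final

variable {V : Type*} [Fintype V] [DecidableEq V]
variable {H : SimpleGraph V} {M Mstar : Finset (Sym2 V)} {G : SimpleGraph V}

open scoped Classical in
lemma per_comp
    (hGMax : IsMaximalMatching G M) (hGMs : IsMatching G Mstar)
    (hHE : ∀ e, e ∈ H.edgeSet ↔ (e ∈ M ∧ e ∉ Mstar) ∨ (e ∈ Mstar ∧ e ∉ M))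
    (c : H.ConnectedComponent) :
    2 * (Ae H M Mstar c).card ≤
      (if IsPathComponent H c 3 then 1 else 0) + 3 * (Be H M Mstar c).card := by
  classical
  have hGM : IsMatching G M := hGMax.1
  have hsplit := Finset.card_sdiff_add_card_inter (Vs H M Mstar c) (Vm H M Mstar c)
  have hdiffle : (Vs H M Mstar c \ Vm H M Mstar c).card ≤ 2 :=
    le_trans (Finset.card_le_card (sdiff_subset_UM hGM hGMs hHE c))
      (card_UM_le hGM hGMs hHE c)
  have hintle : (Vs H M Mstar c ∩ Vm H M Mstar c).card ≤ (Vm H M Mstar c).card :=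
    Finset.card_le_card Finset.inter_subset_right
  have hVs := card_Vs hGM hGMs hHE c
  have hVm := card_Vm hGM hGMs hHE c
  have hmain : 2 * (Ae H M Mstar c).card ≤ 2 * (Be H M Mstar c).card + 2 := by omega
  by_cases hab : (Ae H M Mstar c).card ≤ (Be H M Mstar c).card
  · split_ifs <;> omega
  · have hab' : (Ae H M Mstar c).card = (Be H M Mstar c).card + 1 := by omega
    rcases Nat.lt_or_ge (Be H M Mstar c).card 2 with hblt | hbge
    · interval_cases hbc : (Be H M Mstar c).card
      · -- b = 0 : contradiction with maximality
        exfalso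
        have ha1 : (Ae H M Mstar c).card = 1 := by omega
        obtain ⟨e0, he0⟩ := Finset.card_eq_one.mp ha1
        have he0A : e0 ∈ Ae H M Mstar c := he0 ▸ Finset.mem_singleton_self e0
        obtain ⟨he0H, he0Ms, he0M, he0c, he0d⟩ := Ae_subset hGM hGMs hHE he0A
        have hBe : Be H M Mstar c = ∅ := Finset.card_eq_zero.mp hbc
        have hVmempty : Vm H M Mstar c = ∅ := by
          rw [Vm, hBe]; rfl
        have hunm : ∀ v ∈ e0, ∀ g ∈ M, v ∉ g := by
          intro v hv
          have hvVs : v ∈ Vs H M Mstar c := by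
            rw [Vs, Finset.mem_biUnion]; exact ⟨e0, he0A, mem_ends.mpr hv⟩
          have : v ∈ UM H M c := by
            apply sdiff_subset_UM hGM hGMs hHE
            rw [Finset.mem_sdiff, hVmempty]
            exact ⟨hvVs, Finset.notMem_empty v⟩
          rw [UM, Finset.mem_filter] at this
          exact this.2.2
        apply hGMax.2 e0 (hGMs.1 he0Ms) he0M
        constructor
        · intro f hf
          rw [Finset.coe_insert, Set.mem_insert_iff] at hf
          rcases hf with rfl | hf
          · exact hGMs.1 he0Ms
          · exact hGM.1 hf
        · intro f hf g hg hne v hv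
          rw [Finset.mem_insert] at hf hg
          rcases hf with rfl | hf <;> rcases hg with rfl | hg
          · exact absurd rfl hne
          · exact hunm v hv g hg
          · intro hvg
            exact hunm v hvg f hf hv
          · exact hGM.2 f hf g hg hne v hv
      · -- b = 1 : 3-path component
        have ha2 : (Ae H M Mstar c).card = 2 := by omega
        rw [if_pos (isPathComponent3 hGM hGMs hHE c ha2 hbc)]
        omega
    · split_ifs <;> omega

open scoped Classical in
lemma global
    (hGMax : IsMaximalMatching G M) (hGMs : IsMatching G Mstar)
    (hHE : ∀ e, e ∈ H.edgeSet ↔ (e ∈ M ∧ e ∉ Mstar) ∨ (e ∈ Mstar ∧ e ∉ M)) :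
    2 * (Mstar \ M).card ≤
      {c : H.ConnectedComponent | IsPathComponent H c 3}.ncard
        + 3 * (M \ Mstar).card := by
  classical
  have hGM : IsMatching G M := hGMax.1
  haveI : Fintype H.ConnectedComponent := Fintype.ofFinite _
  have hfib1 : (Mstar \ M).card = ∑ c : H.ConnectedComponent, (Ae H M Mstar c).card := by
    rw [Finset.card_eq_sum_card_fiberwise
      (f := edgeComp H) (t := Finset.univ) (fun x _ => Finset.mem_univ _)]
    refine Finset.sum_congr rfl (fun c _ => congrArg Finset.card (Finset.ext (fun e => ?_)))
    simp only [Ae, Finset.mem_filter]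
  have hfib2 : (M \ Mstar).card = ∑ c : H.ConnectedComponent, (Be H M Mstar c).card := by
    rw [Finset.card_eq_sum_card_fiberwise
      (f := edgeComp H) (t := Finset.univ) (fun x _ => Finset.mem_univ _)]
    refine Finset.sum_congr rfl (fun c _ => congrArg Finset.card (Finset.ext (fun e => ?_)))
    simp only [Be, Finset.mem_filter]
  have hsum : ∑ c : H.ConnectedComponent, 2 * (Ae H M Mstar c).card ≤
      ∑ c : H.ConnectedComponent,
        ((if IsPathComponent H c 3 then 1 else 0) + 3 * (Be H M Mstar c).card) :=
    Finset.sum_le_sum (fun c _ => per_comp hGMax hGMs hHE c)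
  have hboole : ∑ c : H.ConnectedComponent, (if IsPathComponent H c 3 then 1 else 0) =
      (Finset.univ.filter (fun c => IsPathComponent H c 3)).card := by
    simp [Finset.sum_ite]
  have hncard : {c : H.ConnectedComponent | IsPathComponent H c 3}.ncard =
      (Finset.univ.filter (fun c => IsPathComponent H c 3)).card := by
    rw [← Set.ncard_coe_finset]
    congr 1
    ext c
    simp
  rw [Finset.sum_add_distrib, hboole] at hsum
  rw [hfib1, hfib2, hncard, Finset.mul_sum, Finset.mul_sum]
  omega


end Final

end SDAux

/-- For a maximal matching `M` and a maximum matching `M*`, with `k₃` the number of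
connected components of `M ⊕ M*` that are paths with `3` edges, we have
`|M*| − |M| ≤ (1/2)·k₃ + (1/2)|M|`. -/
theorem sym_diff_path_count {V : Type*} [Fintype V] [DecidableEq V]
    (G : SimpleGraph V) (M Mstar : Finset (Sym2 V))
    (hM : IsMaximalMatching G M) (hMstar : IsMaximumMatching G Mstar)
    (H : SimpleGraph V)
    (hH : H = SimpleGraph.fromEdgeSet
      (((M : Set (Sym2 V)) \ (Mstar : Set (Sym2 V))) ∪
        ((Mstar : Set (Sym2 V)) \ (M : Set (Sym2 V))))) :
    (Mstar.card : ℝ) - (M.card : ℝ) ≤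
      (1 / 2) * ({c : H.ConnectedComponent | IsPathComponent H c 3}.ncard : ℝ) +
        (1 / 2) * (M.card : ℝ) := by
  classical
  have hHE : ∀ e, e ∈ H.edgeSet ↔ (e ∈ M ∧ e ∉ Mstar) ∨ (e ∈ Mstar ∧ e ∉ M) := by
    intro e
    rw [hH, SimpleGraph.edgeSet_fromEdgeSet]
    simp only [Set.mem_diff, Set.mem_union, Set.mem_setOf_eq, Finset.mem_coe]
    constructor
    · rintro ⟨(⟨h2, h3⟩ | ⟨h2, h3⟩), _⟩
      · exact Or.inl ⟨h2, h3⟩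
      · exact Or.inr ⟨h2, h3⟩
    · rintro (⟨h2, h3⟩ | ⟨h2, h3⟩)
      · exact ⟨Or.inl ⟨h2, h3⟩, SimpleGraph.not_isDiag_of_mem_edgeSet G (hM.1.1 h2)⟩
      · exact ⟨Or.inr ⟨h2, h3⟩, SimpleGraph.not_isDiag_of_mem_edgeSet G (hMstar.1.1 h2)⟩
  have hglob := SDAux.global hM hMstar.1 hHE
  have h1 := Finset.card_sdiff_add_card_inter Mstar M
  have h2 := Finset.card_sdiff_add_card_inter M Mstar
  have h3 : (Mstar ∩ M).card = (M ∩ Mstar).card := by rw [Finset.inter_comm]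
  have hfin : 2 * Mstar.card ≤
      {c : H.ConnectedComponent | IsPathComponent H c 3}.ncard + 3 * M.card := by
    omega
  have hfinR : (2 : ℝ) * (Mstar.card : ℝ) ≤
      ({c : H.ConnectedComponent | IsPathComponent H c 3}.ncard : ℝ)
        + 3 * (M.card : ℝ) := by
    exact_mod_cast hfin
  linarith
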